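/- π² = 4 ln²(1 + √2) + 8 ∫_{ln(1+√2)}^{∞} arctanh(sech x) dx, where sech x = 1/cosh x and arctanh is the inverse hyperbolic tangent; the improper integral converges. -/

import Mathlib

open Real MeasureTheory
open Set

/-- The inverse hyperbolic tangent: arctanh y = (1/2) ln((1+y)/(1-y)) for |y| < 1. -/
noncomputable def artanh (y : ℝ) : ℝ := (1 / 2) * Real.log ((1 + y) / (1 - y))

/-- π² = 4 ln²(1+√2) + 8 ∫_{ln(1+√2)}^∞ arctanh(sech x) dx, where sech x = 1/cosh x;
the improper integral converges. -/
noncomputable def f (x : ℝ) : ℝ := Real.log (1 + Real.exp (-x)) - Real.log (1 - Real.exp (-x))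

lemma one_lt_sqrt2 : (1:ℝ) < Real.sqrt 2 := by
  nlinarith [Real.sq_sqrt (by norm_num : (0:ℝ) ≤ 2), Real.sqrt_nonneg 2]

lemma sqrt2_lt : Real.sqrt 2 < 3/2 := by
  nlinarith [Real.sq_sqrt (by norm_num : (0:ℝ) ≤ 2), Real.sqrt_nonneg 2]

lemma ha : 0 < Real.log (1 + Real.sqrt 2) := Real.log_pos (by linarith [one_lt_sqrt2])

lemma hexp_a : Real.exp (-Real.log (1 + Real.sqrt 2)) = Real.sqrt 2 - 1 := by
  rw [Real.exp_neg, Real.exp_log (by linarith [one_lt_sqrt2])]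
  exact inv_eq_of_mul_eq_one_left (by nlinarith [Real.sq_sqrt (by norm_num : (0:ℝ) ≤ 2)])

lemma mf : Measurable f := by
  have h : Measurable fun x : ℝ => Real.exp (-x) :=
    (Real.continuous_exp.comp continuous_neg).measurable
  exact (Real.measurable_log.comp (measurable_const.add h)).sub
    (Real.measurable_log.comp (measurable_const.sub h))

lemma key (x : ℝ) (hx : 0 < x) (y : ℝ) :
    y < f x ↔ 1 < Real.exp (-x) + Real.exp (-y) + Real.exp (-x) * Real.exp (-y) := by
  have ht0 : 0 < Real.exp (-x) := Real.exp_pos _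
  have ht1 : Real.exp (-x) < 1 := by
    rw [Real.exp_lt_one_iff]; linarith
  set t := Real.exp (-x) with htdef
  have h1 : f x = Real.log ((1 + t) / (1 - t)) := by
    rw [f, Real.log_div (by linarith) (by linarith)]
  rw [h1, Real.lt_log_iff_exp_lt (div_pos (by linarith) (by linarith))]
  rw [lt_div_iff₀ (by linarith)]
  have hE : Real.exp y * Real.exp (-y) = 1 := by
    rw [← Real.exp_add]; simp
  have hs : 0 < Real.exp (-y) := Real.exp_pos _
  set s := Real.exp (-y)
  set E := Real.exp y
  constructor
  · intro h; nlinarith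
  · intro h; nlinarith

lemma f_pos {x : ℝ} (hx : 0 < x) : 0 < f x := by
  have := (key x hx 0).mpr
  simp only [neg_zero, Real.exp_zero, mul_one] at this
  exact this (by linarith [Real.exp_pos (-x)])

lemma lt_a_iff {y : ℝ} (hy : 0 < y) :
    Real.log (1 + Real.sqrt 2) < f y ↔ y < Real.log (1 + Real.sqrt 2) := by
  rw [key y hy _, hexp_a]
  have h2 : Real.sqrt 2 * Real.sqrt 2 = 2 := Real.mul_self_sqrt (by norm_num)
  have hs2 := one_lt_sqrt2
  constructor
  · intro h
    have hs : Real.sqrt 2 - 1 < Real.exp (-y) := by nlinarith [Real.exp_pos (-y)]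
    rw [← hexp_a] at hs
    have := Real.exp_lt_exp.mp hs
    linarith
  · intro h
    have hs : Real.sqrt 2 - 1 < Real.exp (-y) := by
      rw [← hexp_a]; exact Real.exp_lt_exp.mpr (by linarith)
    nlinarith

lemma f_hasSum {x : ℝ} (hx : 0 < x) :
    HasSum (fun k : ℕ => (2:ℝ) * (1 / (2 * (k:ℝ) + 1)) * Real.exp (-x) ^ (2 * k + 1)) (f x) := by
  have ht1 : Real.exp (-x) < 1 := by rw [Real.exp_lt_one_iff]; linarith
  have h : |Real.exp (-x)| < 1 := by
    rw [abs_of_pos (Real.exp_pos _)]; exact ht1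
  exact Real.hasSum_log_sub_log_of_abs_lt_one h

lemma f_int : IntegrableOn f (Ioi (Real.log (1 + Real.sqrt 2))) := by
  have hbound : IntegrableOn (fun x : ℝ => 4 * Real.exp (-(1:ℝ) * x)) (Ioi (Real.log (1 + Real.sqrt 2))) :=
    ((exp_neg_integrableOn_Ioi _ one_pos)).const_mul 4
  refine Integrable.mono hbound (mf.aestronglyMeasurable) ?_
  rw [ae_restrict_iff' measurableSet_Ioi]
  refine ae_of_all _ fun x hx => ?_
  have hx0 : 0 < x := lt_trans ha hx
  have ht0 : 0 < Real.exp (-x) := Real.exp_pos _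
  have ht : Real.exp (-x) < Real.sqrt 2 - 1 := by
    rw [← hexp_a]; exact Real.exp_lt_exp.mpr (by simpa using hx)
  have ht1 : Real.exp (-x) < 1/2 := by linarith [sqrt2_lt]
  set t := Real.exp (-x)
  have hle : f x ≤ 4 * t := by
    have hlog1 : Real.log (1 + t) ≤ t := by
      have := Real.log_le_sub_one_of_pos (show (0:ℝ) < 1 + t by linarith)
      linarith
    have hlog2 : -Real.log (1 - t) ≤ 3 * t := by
      have h' : Real.log (1 - t)⁻¹ ≤ (1 - t)⁻¹ - 1 :=
        Real.log_le_sub_one_of_pos (inv_pos.mpr (by linarith))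
      rw [Real.log_inv] at h'
      have hne : (1:ℝ) - t ≠ 0 := by linarith
      have hinv : (1 - t)⁻¹ - 1 = t / (1 - t) := by field_simp; ring
      have : t / (1 - t) ≤ 3 * t := by
        rw [div_le_iff₀ (by linarith)]; nlinarith
      linarith
    simp only [f]; linarith
  rw [Real.norm_eq_abs, Real.norm_eq_abs, abs_of_pos (f_pos hx0),
    abs_of_pos (by positivity : (0:ℝ) < 4 * Real.exp (-(1:ℝ) * x))]
  calc f x ≤ 4 * t := hle
  _ = 4 * Real.exp (-(1:ℝ) * x) := by norm_num [t]

lemma hasSum_odd_sq : HasSum (fun k : ℕ => (1:ℝ) / (2 * (k:ℝ) + 1) ^ 2) (π ^ 2 / 8) := by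
  have h6 : HasSum (fun n : ℕ => (1:ℝ) / (n:ℝ) ^ 2) (π ^ 2 / 6) := hasSum_zeta_two
  set F : ℕ → ℝ := fun n => (1:ℝ) / (n:ℝ) ^ 2 with hF
  have heven : HasSum (fun k : ℕ => F (2 * k)) (π ^ 2 / 24) := by
    have h := h6.mul_left (1/4)
    have heq : (fun k : ℕ => F (2 * k)) = fun k : ℕ => (1/4) * F k := by
      funext k
      simp only [F]
      push_cast
      rw [mul_pow]
      ring
    rw [heq]
    have hv : (1:ℝ)/4 * (π ^ 2/6) = π ^ 2 / 24 := by ring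
    rw [← hv]
    exact h
  have hodd_summable : Summable (fun k : ℕ => F (2 * k + 1)) :=
    h6.summable.comp_injective (fun m n h => by omega)
  have hodd := hodd_summable.hasSum
  have htotal := heven.even_add_odd hodd
  have huniq := h6.unique htotal
  have hval : ∑' k : ℕ, F (2 * k + 1) = π ^ 2 / 8 := by linarith
  rw [hval] at hodd
  have heq2 : (fun k : ℕ => (1:ℝ) / (2 * (k:ℝ) + 1) ^ 2) = fun k : ℕ => F (2 * k + 1) := by
    funext k; simp only [F]; push_cast; ring
  rw [heq2]
  exact hodd

lemma int_exp_c {c : ℝ} (hc : 0 < c) :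
    ∫ x in Ioi (0:ℝ), Real.exp (-(c * x)) = 1 / c := by
  have h := integral_comp_mul_left_Ioi (fun u => Real.exp (-u)) 0 hc
  simp only [mul_zero] at h
  rw [integral_exp_neg_Ioi] at h
  simp only [neg_zero, Real.exp_zero, smul_eq_mul, mul_one] at h
  rw [h, one_div]

lemma term_rw (k : ℕ) :
    (fun x : ℝ => 2 * (1 / (2 * (k:ℝ) + 1)) * Real.exp (-x) ^ (2 * k + 1)) =
      fun x : ℝ => 2 * (1 / (2 * (k:ℝ) + 1)) * Real.exp (-(((2 * k + 1 : ℕ):ℝ) * x)) := by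
  funext x
  rw [← Real.exp_nat_mul]
  ring_nf

lemma term_integrable (k : ℕ) :
    IntegrableOn (fun x : ℝ => 2 * (1 / (2 * (k:ℝ) + 1)) * Real.exp (-x) ^ (2 * k + 1)) (Ioi (0:ℝ)) := by
  rw [term_rw k]
  have hc : (0:ℝ) < ((2 * k + 1 : ℕ):ℝ) := by positivity
  have h := exp_neg_integrableOn_Ioi (b := ((2 * k + 1 : ℕ):ℝ)) 0 hc
  have heq : (fun x : ℝ => Real.exp (-((2 * k + 1 : ℕ):ℝ) * x)) =
      fun x : ℝ => Real.exp (-(((2 * k + 1 : ℕ):ℝ) * x)) := by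
    funext x; ring_nf
  rw [heq] at h
  exact h.const_mul _

lemma term_nonneg (k : ℕ) (x : ℝ) :
    0 ≤ 2 * (1 / (2 * (k:ℝ) + 1)) * Real.exp (-x) ^ (2 * k + 1) := by positivity

lemma term_int (k : ℕ) :
    ∫ x in Ioi (0:ℝ), 2 * (1 / (2 * (k:ℝ) + 1)) * Real.exp (-x) ^ (2 * k + 1) =
      2 * ((1:ℝ) / (2 * (k:ℝ) + 1) ^ 2) := by
  rw [term_rw k, MeasureTheory.integral_const_mul]
  have hc : (0:ℝ) < ((2 * k + 1 : ℕ):ℝ) := by positivity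
  rw [int_exp_c hc]
  have : ((2 * k + 1 : ℕ):ℝ) = 2 * (k:ℝ) + 1 := by push_cast; ring
  rw [this]
  have hne : 2 * (k:ℝ) + 1 ≠ 0 := by positivity
  field_simp

lemma lint_total :
    ∫⁻ x in Ioi (0:ℝ), ENNReal.ofReal (f x) = ENNReal.ofReal (π ^ 2 / 4) := by
  have hpt : ∀ᵐ x ∂(volume : Measure ℝ), x ∈ Ioi (0:ℝ) → ENNReal.ofReal (f x)
      = ∑' k : ℕ, ENNReal.ofReal (2 * (1 / (2 * (k:ℝ) + 1)) * Real.exp (-x) ^ (2 * k + 1)) := by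
    refine ae_of_all _ fun x hx => ?_
    have hs := f_hasSum (mem_Ioi.mp hx)
    rw [← hs.tsum_eq]
    exact ENNReal.ofReal_tsum_of_nonneg (fun k => term_nonneg k x) hs.summable
  rw [setLIntegral_congr_fun_ae measurableSet_Ioi hpt]
  have hm : ∀ k : ℕ, Measurable fun x : ℝ =>
      ENNReal.ofReal (2 * (1 / (2 * (k:ℝ) + 1)) * Real.exp (-x) ^ (2 * k + 1)) := by
    intro k
    exact (measurable_const.mul
      (((Real.continuous_exp.comp continuous_neg).measurable).pow_const _)).ennreal_ofReal
  rw [lintegral_tsum fun k => (hm k).aemeasurable]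
  have hterm : ∀ k : ℕ, (∫⁻ x in Ioi (0:ℝ),
      ENNReal.ofReal (2 * (1 / (2 * (k:ℝ) + 1)) * Real.exp (-x) ^ (2 * k + 1)))
      = ENNReal.ofReal (2 * ((1:ℝ) / (2 * (k:ℝ) + 1) ^ 2)) := by
    intro k
    rw [← MeasureTheory.ofReal_integral_eq_lintegral_ofReal (term_integrable k)
      (ae_of_all _ fun x => term_nonneg k x), term_int k]
  simp only [hterm]
  rw [← ENNReal.ofReal_tsum_of_nonneg (fun k => by positivity)
    (hasSum_odd_sq.mul_left 2).summable]
  rw [(hasSum_odd_sq.mul_left 2).tsum_eq]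
  congr 1
  ring

lemma region_eq :
    regionBetween (fun _ : ℝ => Real.log (1 + Real.sqrt 2)) f
        (Ioo 0 (Real.log (1 + Real.sqrt 2)))
      = Prod.swap ⁻¹' (regionBetween (fun _ : ℝ => (0:ℝ)) f
        (Ioi (Real.log (1 + Real.sqrt 2)))) := by
  ext p
  obtain ⟨x, y⟩ := p
  simp only [regionBetween, mem_setOf_eq, mem_Ioo, mem_Ioi, Set.mem_preimage, Prod.swap]
  constructor
  · rintro ⟨⟨hx0, hxa⟩, hay, hyf⟩
    have hy0 : 0 < y := lt_trans ha hay
    have h1 := (key x hx0 y).mp hyf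
    refine ⟨hay, hx0, ?_⟩
    exact (key y hy0 x).mpr (by linarith [mul_comm (Real.exp (-x)) (Real.exp (-y))])
  · rintro ⟨hay, hx0, hxf⟩
    have hy0 : 0 < y := lt_trans ha hay
    have h1 := (key y hy0 x).mp hxf
    have hyf : y < f x :=
      (key x hx0 y).mpr (by linarith [mul_comm (Real.exp (-x)) (Real.exp (-y))])
    have hfa : Real.log (1 + Real.sqrt 2) < f x := lt_trans hay hyf
    exact ⟨⟨hx0, (lt_a_iff hx0).mp hfa⟩, hay, hyf⟩

lemma lint_decomp :
    ∫⁻ x in Ioo (0:ℝ) (Real.log (1 + Real.sqrt 2)),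
        ENNReal.ofReal (f x - Real.log (1 + Real.sqrt 2))
      = ∫⁻ x in Ioi (Real.log (1 + Real.sqrt 2)), ENNReal.ofReal (f x) := by
  have h1 := volume_regionBetween_eq_lintegral' (μ := (volume : Measure ℝ))
    (measurable_const : Measurable fun _ : ℝ => Real.log (1 + Real.sqrt 2)) mf
    (measurableSet_Ioo : MeasurableSet (Ioo (0:ℝ) (Real.log (1 + Real.sqrt 2))))
  have h2 := volume_regionBetween_eq_lintegral' (μ := (volume : Measure ℝ))
    (measurable_const : Measurable fun _ : ℝ => (0:ℝ)) mf
    (measurableSet_Ioi : MeasurableSet (Ioi (Real.log (1 + Real.sqrt 2))))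
  have h3 : (volume : Measure ℝ).prod volume
      (regionBetween (fun _ : ℝ => Real.log (1 + Real.sqrt 2)) f
        (Ioo 0 (Real.log (1 + Real.sqrt 2))))
      = (volume : Measure ℝ).prod volume
      (regionBetween (fun _ : ℝ => (0:ℝ)) f (Ioi (Real.log (1 + Real.sqrt 2)))) := by
    rw [region_eq]
    exact (Measure.measurePreserving_swap).measure_preimage
      (measurableSet_regionBetween measurable_const mf measurableSet_Ioi).nullMeasurableSet
  rw [h1, h2] at h3
  simpa using h3

lemma main_eq :
    π ^ 2 = 4 * Real.log (1 + Real.sqrt 2) ^ 2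
      + 8 * ∫ x in Ioi (Real.log (1 + Real.sqrt 2)), f x := by
  set a := Real.log (1 + Real.sqrt 2) with hadef
  set I := ∫ x in Ioi a, f x with hIdef
  have hI0 : 0 ≤ I :=
    setIntegral_nonneg measurableSet_Ioi fun x hx => (f_pos (lt_trans ha hx)).le
  have hlI : ∫⁻ x in Ioi a, ENNReal.ofReal (f x) = ENNReal.ofReal I := by
    rw [hIdef, MeasureTheory.ofReal_integral_eq_lintegral_ofReal f_int
      ((ae_restrict_iff' measurableSet_Ioi).2
        (ae_of_all _ fun x hx => (f_pos (lt_trans ha hx)).le))]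
  have hsplit : Ioc (0:ℝ) a ∪ Ioi a = Ioi (0:ℝ) := Ioc_union_Ioi_eq_Ioi ha.le
  have hdisj : Disjoint (Ioc (0:ℝ) a) (Ioi a) := Ioc_disjoint_Ioi le_rfl
  have hunion : ∫⁻ x in Ioi (0:ℝ), ENNReal.ofReal (f x)
      = (∫⁻ x in Ioc (0:ℝ) a, ENNReal.ofReal (f x))
        + ∫⁻ x in Ioi a, ENNReal.ofReal (f x) := by
    rw [← hsplit, lintegral_union measurableSet_Ioi hdisj]
  have hIoc : ∫⁻ x in Ioc (0:ℝ) a, ENNReal.ofReal (f x)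
      = ∫⁻ x in Ioo (0:ℝ) a, ENNReal.ofReal (f x) :=
    setLIntegral_congr (μ := (volume : Measure ℝ)) ((Ioo_ae_eq_Ioc (a := (0:ℝ)) (b := a)).symm)
  have hIoo : ∫⁻ x in Ioo (0:ℝ) a, ENNReal.ofReal (f x)
      = ENNReal.ofReal a * ENNReal.ofReal a
        + ∫⁻ x in Ioo (0:ℝ) a, ENNReal.ofReal (f x - a) := by
    have hpt : ∀ᵐ x ∂(volume : Measure ℝ), x ∈ Ioo (0:ℝ) a →
        ENNReal.ofReal (f x) = ENNReal.ofReal a + ENNReal.ofReal (f x - a) := by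
      refine ae_of_all _ fun x hx => ?_
      have hfa : a < f x := (lt_a_iff hx.1).mpr hx.2
      rw [← ENNReal.ofReal_add ha.le (by linarith)]
      congr 1
      ring
    rw [setLIntegral_congr_fun_ae measurableSet_Ioo hpt,
      lintegral_add_left measurable_const]
    congr 1
    rw [setLIntegral_const, Real.volume_Ioo, sub_zero]
  have hmain : ENNReal.ofReal (π ^ 2 / 4)
      = ENNReal.ofReal a * ENNReal.ofReal a
        + ENNReal.ofReal I + ENNReal.ofReal I := by
    rw [← lint_total, hunion, hIoc, hIoo, lint_decomp, hlI, add_assoc]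
  have h1 : (0:ℝ) ≤ a * a := mul_nonneg ha.le ha.le
  have h2 : (0:ℝ) ≤ a * a + I := add_nonneg h1 hI0
  have h3 : (0:ℝ) ≤ a * a + I + I := add_nonneg h2 hI0
  rw [← ENNReal.ofReal_mul ha.le, ← ENNReal.ofReal_add h1 hI0,
    ← ENNReal.ofReal_add h2 hI0] at hmain
  have hfin := (ENNReal.ofReal_eq_ofReal_iff (by positivity) h3).mp hmain
  have hsq : a * a = a ^ 2 := (sq a).symm
  linarith

lemma artanh_eq {x : ℝ} (hx : 0 < x) : _root_.artanh (1 / Real.cosh x) = f x := by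
  have ht0 : 0 < Real.exp (-x) := Real.exp_pos _
  have ht1 : Real.exp (-x) < 1 := by rw [Real.exp_lt_one_iff]; linarith
  have hx' : Real.exp x = (Real.exp (-x))⁻¹ := by
    rw [Real.exp_neg, inv_inv]
  set t := Real.exp (-x) with htdef
  have hch : Real.cosh x = (1 + t ^ 2) / (2 * t) := by
    rw [Real.cosh_eq, hx']
    field_simp
    ring
  have hsech : 1 / Real.cosh x = 2 * t / (1 + t ^ 2) := by
    rw [hch]
    field_simp
  have hrat : (1 + 2 * t / (1 + t ^ 2)) / (1 - 2 * t / (1 + t ^ 2))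
      = ((1 + t) / (1 - t)) ^ 2 := by
    have h1 : (0:ℝ) < 1 + t ^ 2 := by positivity
    have h2 : (1:ℝ) - t ≠ 0 := by linarith
    have hnum : 1 + 2 * t / (1 + t ^ 2) = (1 + t) ^ 2 / (1 + t ^ 2) := by
      field_simp; ring
    have hden : 1 - 2 * t / (1 + t ^ 2) = (1 - t) ^ 2 / (1 + t ^ 2) := by
      field_simp; ring
    rw [hnum, hden, div_div_div_comm, div_self h1.ne', div_one, div_pow]
  rw [_root_.artanh, hsech, hrat, Real.log_pow]
  rw [Real.log_div (by linarith) (by linarith)]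
  simp only [f]
  push_cast
  ring


theorem pi_sq_artanh_sech :
    IntegrableOn (fun x : ℝ => _root_.artanh (1 / Real.cosh x))
      (Set.Ioi (Real.log (1 + Real.sqrt 2))) ∧
    π ^ 2 = 4 * Real.log (1 + Real.sqrt 2) ^ 2
      + 8 * ∫ x in Set.Ioi (Real.log (1 + Real.sqrt 2)),
              _root_.artanh (1 / Real.cosh x) := by
  have heq : EqOn f (fun x : ℝ => _root_.artanh (1 / Real.cosh x))
      (Set.Ioi (Real.log (1 + Real.sqrt 2))) :=
    fun x hx => (artanh_eq (lt_trans ha hx)).symm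
  constructor
  · exact f_int.congr_fun heq measurableSet_Ioi
  · rw [← MeasureTheory.setIntegral_congr_fun measurableSet_Ioi heq]
    exact main_eq
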